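/- arXiv:math/0202294 — 2 statements merged into one kernel-verified Lean document; each statement's English description precedes it below -/
import Mathlib

section
/- The Fano matroid is representable over a field k only if k has characteristic 2. -/
/-- The 3-element circuits of the Fano matroid on `{0, ..., 6}`
(the sets `{3,5,6}, {2,5,7}, {1,6,7}, {3,4,7}, {2,4,6}, {1,4,5}, {1,2,3}` shifted to
0-indexing). -/
def fanoCircuits : Set (Set (Fin 7)) :=
  {{2,4,5}, {1,4,6}, {0,5,6}, {2,3,6}, {1,3,5}, {0,3,4}, {0,1,2}}

/-- Independence in the Fano matroid: sets of cardinality at most `3` containing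
none of the seven `3`-element circuits. -/
def fanoIndep (X : Set (Fin 7)) : Prop :=
  X.ncard ≤ 3 ∧ ∀ C ∈ fanoCircuits, ¬C ⊆ X

section Aux

variable {k V : Type*} [Field k] [AddCommGroup V] [Module k V]

private def tripleEquiv {α : Type*} [DecidableEq α] {i j l : α} (hij : i ≠ j) (hil : i ≠ l)
    (hjl : j ≠ l) : Fin 3 ≃ ({i,j,l} : Set α) where
  toFun := ![⟨i, by simp⟩, ⟨j, by simp⟩, ⟨l, by simp⟩]
  invFun x := if (x : α) = i then 0 else if (x : α) = j then 1 else 2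
  left_inv a := by fin_cases a <;> simp [hij.symm, hil.symm, hjl.symm]
  right_inv x := by
    obtain ⟨x, hx⟩ := x
    simp only [Set.mem_insert_iff, Set.mem_singleton_iff] at hx
    rcases hx with rfl | rfl | rfl <;> simp [hij.symm, hil.symm, hjl.symm]

private lemma li_triple_iff {φ : Fin 7 → V} {i j l : Fin 7} (hij : i ≠ j) (hil : i ≠ l)
    (hjl : j ≠ l) :
    LinearIndependent k (fun x : ({i,j,l} : Set (Fin 7)) => φ x) ↔
      LinearIndependent k ![φ i, φ j, φ l] := by
  have he : (fun x : ({i,j,l} : Set (Fin 7)) => φ x) ∘ (tripleEquiv hij hil hjl)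
      = ![φ i, φ j, φ l] := by
    funext a; fin_cases a <;> rfl
  rw [← linearIndependent_equiv (tripleEquiv hij hil hjl), he]

/-- Solve a three-term linear relation for the last vector. -/
private lemma solve2 {x y z : k} {a b p : V} (h : x • a + y • b + z • p = 0) (hz : z ≠ 0) :
    p = (-(z⁻¹ * x)) • a + (-(z⁻¹ * y)) • b := by
  have h1 : z • p = -(x • a + y • b) := by
    exact eq_neg_of_add_eq_zero_right h
  have h2 : p = z⁻¹ • (z • p) := (inv_smul_smul₀ hz p).symm
  rw [h2, h1]
  module

private lemma sub3 {x1 y1 z1 x2 y2 z2 : k} {u v w : V}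
    (h : x1 • u + y1 • v + z1 • w = x2 • u + y2 • v + z2 • w) :
    (x1 - x2) • u + (y1 - y2) • v + (z1 - z2) • w = 0 := by
  have h2 : (x1 - x2) • u + (y1 - y2) • v + (z1 - z2) • w
      = (x1 • u + y1 • v + z1 • w) - (x2 • u + y2 • v + z2 • w) := by module
  rw [h2, h, sub_self]

end Aux

set_option maxHeartbeats 2000000 in
/-- The Fano matroid is representable over a field `k` only if `k` has characteristic 2. -/
theorem fano_representable_only_char_two
    {k : Type*} [Field k] {m : ℕ} (φ : Fin 7 → (Fin m → k))
    (hrep : ∀ X : Set (Fin 7), fanoIndep X ↔ LinearIndependent k (fun x : X => φ x)) :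
    CharP k 2 := by
  classical
  have key : ∀ i j l : Fin 7, i ≠ j → i ≠ l → j ≠ l →
      (fanoIndep {i,j,l} ↔ LinearIndependent k ![φ i, φ j, φ l]) := fun i j l hij hil hjl =>
    (hrep _).trans (li_triple_iff hij hil hjl)
  have ncard3 : ∀ i j l : Fin 7, ({i,j,l} : Set (Fin 7)).ncard ≤ 3 := by
    intro i j l
    have h1 := Set.ncard_insert_le i ({j,l} : Set (Fin 7))
    have h2 := Set.ncard_insert_le j ({l} : Set (Fin 7))
    rw [Set.ncard_singleton] at h2
    omega
  have ind : ∀ i j l : Fin 7, i ≠ j → i ≠ l → j ≠ l →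
      (∀ C ∈ fanoCircuits, ¬C ⊆ ({i,j,l} : Set (Fin 7))) →
      ∀ x y z : k, x • φ i + y • φ j + z • φ l = 0 → x = 0 ∧ y = 0 ∧ z = 0 := by
    intro i j l hij hil hjl hC x y z hsum
    have hli : LinearIndependent k ![φ i, φ j, φ l] :=
      (key i j l hij hil hjl).mp ⟨ncard3 i j l, hC⟩
    have hz := Fintype.linearIndependent_iff.mp hli ![x, y, z]
      (by simpa [Fin.sum_univ_three] using hsum)
    exact ⟨hz 0, hz 1, hz 2⟩
  have dep : ∀ i j l : Fin 7, i ≠ j → i ≠ l → j ≠ l →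
      ({i,j,l} : Set (Fin 7)) ∈ fanoCircuits →
      ∃ x y z : k, x • φ i + y • φ j + z • φ l = 0 ∧ ¬(x = 0 ∧ y = 0 ∧ z = 0) := by
    intro i j l hij hil hjl hmem
    have hni : ¬ LinearIndependent k ![φ i, φ j, φ l] := by
      rw [← key i j l hij hil hjl]
      rintro ⟨-, h⟩
      exact h _ hmem Set.Subset.rfl
    obtain ⟨g, hg, i0, hi0⟩ := Fintype.not_linearIndependent_iff.mp hni
    refine ⟨g 0, g 1, g 2, by simpa [Fin.sum_univ_three] using hg, ?_⟩
    rintro ⟨h0, h1, h2⟩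
    apply hi0
    fin_cases i0
    · exact h0
    · exact h1
    · exact h2
  -- the nine independent triples we use
  have hs013 : ∀ C ∈ fanoCircuits, ¬C ⊆ ({0,1,3} : Set (Fin 7)) := by
    intro C hC
    simp only [fanoCircuits, Set.mem_insert_iff, Set.mem_singleton_iff] at hC
    rcases hC with rfl|rfl|rfl|rfl|rfl|rfl|rfl <;>
      · simp only [Set.subset_def, Set.mem_insert_iff, Set.mem_singleton_iff]; decide
  have hs123 : ∀ C ∈ fanoCircuits, ¬C ⊆ ({1,2,3} : Set (Fin 7)) := by
    intro C hC
    simp only [fanoCircuits, Set.mem_insert_iff, Set.mem_singleton_iff] at hC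
    rcases hC with rfl|rfl|rfl|rfl|rfl|rfl|rfl <;>
      · simp only [Set.subset_def, Set.mem_insert_iff, Set.mem_singleton_iff]; decide
  have hs023 : ∀ C ∈ fanoCircuits, ¬C ⊆ ({0,2,3} : Set (Fin 7)) := by
    intro C hC
    simp only [fanoCircuits, Set.mem_insert_iff, Set.mem_singleton_iff] at hC
    rcases hC with rfl|rfl|rfl|rfl|rfl|rfl|rfl <;>
      · simp only [Set.subset_def, Set.mem_insert_iff, Set.mem_singleton_iff]; decide
  have hs134 : ∀ C ∈ fanoCircuits, ¬C ⊆ ({1,3,4} : Set (Fin 7)) := by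
    intro C hC
    simp only [fanoCircuits, Set.mem_insert_iff, Set.mem_singleton_iff] at hC
    rcases hC with rfl|rfl|rfl|rfl|rfl|rfl|rfl <;>
      · simp only [Set.subset_def, Set.mem_insert_iff, Set.mem_singleton_iff]; decide
  have hs014 : ∀ C ∈ fanoCircuits, ¬C ⊆ ({0,1,4} : Set (Fin 7)) := by
    intro C hC
    simp only [fanoCircuits, Set.mem_insert_iff, Set.mem_singleton_iff] at hC
    rcases hC with rfl|rfl|rfl|rfl|rfl|rfl|rfl <;>
      · simp only [Set.subset_def, Set.mem_insert_iff, Set.mem_singleton_iff]; decide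
  have hs035 : ∀ C ∈ fanoCircuits, ¬C ⊆ ({0,3,5} : Set (Fin 7)) := by
    intro C hC
    simp only [fanoCircuits, Set.mem_insert_iff, Set.mem_singleton_iff] at hC
    rcases hC with rfl|rfl|rfl|rfl|rfl|rfl|rfl <;>
      · simp only [Set.subset_def, Set.mem_insert_iff, Set.mem_singleton_iff]; decide
  have hs015 : ∀ C ∈ fanoCircuits, ¬C ⊆ ({0,1,5} : Set (Fin 7)) := by
    intro C hC
    simp only [fanoCircuits, Set.mem_insert_iff, Set.mem_singleton_iff] at hC
    rcases hC with rfl|rfl|rfl|rfl|rfl|rfl|rfl <;>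
      · simp only [Set.subset_def, Set.mem_insert_iff, Set.mem_singleton_iff]; decide
  have hs136 : ∀ C ∈ fanoCircuits, ¬C ⊆ ({1,3,6} : Set (Fin 7)) := by
    intro C hC
    simp only [fanoCircuits, Set.mem_insert_iff, Set.mem_singleton_iff] at hC
    rcases hC with rfl|rfl|rfl|rfl|rfl|rfl|rfl <;>
      · simp only [Set.subset_def, Set.mem_insert_iff, Set.mem_singleton_iff]; decide
  have hs016 : ∀ C ∈ fanoCircuits, ¬C ⊆ ({0,1,6} : Set (Fin 7)) := by
    intro C hC
    simp only [fanoCircuits, Set.mem_insert_iff, Set.mem_singleton_iff] at hC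
    rcases hC with rfl|rfl|rfl|rfl|rfl|rfl|rfl <;>
      · simp only [Set.subset_def, Set.mem_insert_iff, Set.mem_singleton_iff]; decide
  have ind013 := ind 0 1 3 (by decide) (by decide) (by decide) hs013
  have ind123 := ind 1 2 3 (by decide) (by decide) (by decide) hs123
  have ind023 := ind 0 2 3 (by decide) (by decide) (by decide) hs023
  have ind134 := ind 1 3 4 (by decide) (by decide) (by decide) hs134
  have ind014 := ind 0 1 4 (by decide) (by decide) (by decide) hs014
  have ind035 := ind 0 3 5 (by decide) (by decide) (by decide) hs035
  have ind015 := ind 0 1 5 (by decide) (by decide) (by decide) hs015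
  have ind136 := ind 1 3 6 (by decide) (by decide) (by decide) hs136
  have ind016 := ind 0 1 6 (by decide) (by decide) (by decide) hs016
  -- φ 2 = a • φ 0 + b • φ 1
  obtain ⟨x1, y1, z1, h7, hn7⟩ := dep 0 1 2 (by decide) (by decide) (by decide)
    (by simp [fanoCircuits])
  have hz1 : z1 ≠ 0 := by
    intro hz
    have h := ind013 x1 y1 0 (by rw [hz] at h7; simpa using h7)
    exact hn7 ⟨h.1, h.2.1, hz⟩
  set a : k := -(z1⁻¹ * x1) with ha_def
  set b : k := -(z1⁻¹ * y1) with hb_def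
  have hφ2 : φ 2 = a • φ 0 + b • φ 1 := solve2 h7 hz1
  have ha : a ≠ 0 := by
    intro h0
    have h := ind123 b (-1) 0 (by rw [hφ2, h0]; module)
    simpa using h.2.1
  have hb : b ≠ 0 := by
    intro h0
    have h := ind023 a (-1) 0 (by rw [hφ2, h0]; module)
    simpa using h.2.1
  -- φ 4 = c • φ 0 + d • φ 3
  obtain ⟨x2, y2, z2, h6, hn6'⟩ := dep 0 3 4 (by decide) (by decide) (by decide)
    (by simp [fanoCircuits])
  have hz2 : z2 ≠ 0 := by
    intro hz
    have h := ind013 x2 0 y2 (by rw [hz] at h6; rw [show x2 • φ 0 + (0:k) • φ 1 + y2 • φ 3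
      = x2 • φ 0 + y2 • φ 3 + (0:k) • φ 4 by module]; simpa using h6)
    exact hn6' ⟨h.1, h.2.2, hz⟩
  set c : k := -(z2⁻¹ * x2) with hc_def
  set d : k := -(z2⁻¹ * y2) with hd_def
  have hφ4 : φ 4 = c • φ 0 + d • φ 3 := solve2 h6 hz2
  have hc : c ≠ 0 := by
    intro h0
    have h := ind134 0 d (-1) (by rw [hφ4, h0]; module)
    simpa using h.2.2
  have hd : d ≠ 0 := by
    intro h0
    have h := ind014 c 0 (-1) (by rw [hφ4, h0]; module)
    simpa using h.2.2
  -- φ 5 = e • φ 1 + f • φ 3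
  obtain ⟨x3, y3, z3, h5, hn5'⟩ := dep 1 3 5 (by decide) (by decide) (by decide)
    (by simp [fanoCircuits])
  have hz3 : z3 ≠ 0 := by
    intro hz
    have h := ind013 0 x3 y3 (by rw [hz] at h5; rw [show (0:k) • φ 0 + x3 • φ 1 + y3 • φ 3
      = x3 • φ 1 + y3 • φ 3 + (0:k) • φ 5 by module]; simpa using h5)
    exact hn5' ⟨h.2.1, h.2.2, hz⟩
  set e : k := -(z3⁻¹ * x3) with he_def
  set f : k := -(z3⁻¹ * y3) with hf_def
  have hφ5 : φ 5 = e • φ 1 + f • φ 3 := solve2 h5 hz3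
  have he : e ≠ 0 := by
    intro h0
    have h := ind035 0 f (-1) (by rw [hφ5, h0]; module)
    simpa using h.2.2
  have hf : f ≠ 0 := by
    intro h0
    have h := ind015 0 e (-1) (by rw [hφ5, h0]; module)
    simpa using h.2.2
  -- φ 6 = (t*a) • φ 0 + (t*b) • φ 1 + s • φ 3, via the circuit {2,3,6}
  obtain ⟨x4, y4, z4, h4, hn4⟩ := dep 2 3 6 (by decide) (by decide) (by decide)
    (by simp [fanoCircuits])
  have hz4 : z4 ≠ 0 := by
    intro hz
    have hrel : (x4 * a) • φ 0 + (x4 * b) • φ 1 + y4 • φ 3 = 0 := by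
      rw [hz] at h4
      calc (x4 * a) • φ 0 + (x4 * b) • φ 1 + y4 • φ 3
          = x4 • (a • φ 0 + b • φ 1) + y4 • φ 3 + (0:k) • φ 6 := by module
        _ = x4 • φ 2 + y4 • φ 3 + (0:k) • φ 6 := by rw [hφ2]
        _ = 0 := by simpa using h4
    have h := ind013 _ _ _ hrel
    have hx4 : x4 = 0 := by
      rcases mul_eq_zero.mp h.1 with h' | h'
      · exact h'
      · exact absurd h' ha
    exact hn4 ⟨hx4, h.2.2, hz⟩
  set t : k := -(z4⁻¹ * x4) with ht_def
  set s : k := -(z4⁻¹ * y4) with hs_def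
  have hsol6 : φ 6 = t • φ 2 + s • φ 3 := solve2 h4 hz4
  have hφ6 : φ 6 = (t * a) • φ 0 + (t * b) • φ 1 + s • φ 3 := by
    rw [hsol6, hφ2]; module
  -- nonvanishing of the first and last coordinate of φ 6
  have hta : t * a ≠ 0 := by
    intro h0
    have h := ind136 (t * b) s (-1) (by rw [hφ6, h0]; module)
    simpa using h.2.2
  have hs0 : s ≠ 0 := by
    intro h0
    have h := ind016 (t * a) (t * b) (-1) (by rw [hφ6, h0]; module)
    simpa using h.2.2
  -- circuit {0,5,6} : gives (t*b) * f = s * e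
  obtain ⟨x5, y5, z5, h05, hn05⟩ := dep 0 5 6 (by decide) (by decide) (by decide)
    (by simp [fanoCircuits])
  have hz5 : z5 ≠ 0 := by
    intro hz
    have hrel : x5 • φ 0 + (y5 * e) • φ 1 + (y5 * f) • φ 3 = 0 := by
      rw [hz] at h05
      calc x5 • φ 0 + (y5 * e) • φ 1 + (y5 * f) • φ 3
          = x5 • φ 0 + y5 • (e • φ 1 + f • φ 3) + (0:k) • φ 6 := by module
        _ = x5 • φ 0 + y5 • φ 5 + (0:k) • φ 6 := by rw [hφ5]
        _ = 0 := by simpa using h05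
    have h := ind013 _ _ _ hrel
    have hy5 : y5 = 0 := by
      rcases mul_eq_zero.mp h.2.1 with h' | h'
      · exact h'
      · exact absurd h' he
    exact hn05 ⟨h.1, hy5, hz⟩
  have hsol6' : φ 6 = (-(z5⁻¹ * x5)) • φ 0 + (-(z5⁻¹ * y5)) • φ 5 := solve2 h05 hz5
  have hφ6' : φ 6 = (-(z5⁻¹ * x5)) • φ 0 + ((-(z5⁻¹ * y5)) * e) • φ 1
      + ((-(z5⁻¹ * y5)) * f) • φ 3 := by
    rw [hsol6', hφ5]; module
  have heq1 := sub3 (k := k) (u := φ 0) (v := φ 1) (w := φ 3) (hφ6.symm.trans hφ6')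
  have hcmp1 := ind013 _ _ _ heq1
  have hβ : t * b = (-(z5⁻¹ * y5)) * e := sub_eq_zero.mp hcmp1.2.1
  have hγ : s = (-(z5⁻¹ * y5)) * f := sub_eq_zero.mp hcmp1.2.2
  have r1 : (t * b) * f = s * e := by rw [hβ, hγ]; ring
  -- circuit {1,4,6} : gives (t*a) * d = s * c
  obtain ⟨x6, y6, z6, h16, hn16⟩ := dep 1 4 6 (by decide) (by decide) (by decide)
    (by simp [fanoCircuits])
  have hz6 : z6 ≠ 0 := by
    intro hz
    have hrel : (y6 * c) • φ 0 + x6 • φ 1 + (y6 * d) • φ 3 = 0 := by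
      rw [hz] at h16
      calc (y6 * c) • φ 0 + x6 • φ 1 + (y6 * d) • φ 3
          = x6 • φ 1 + y6 • (c • φ 0 + d • φ 3) + (0:k) • φ 6 := by module
        _ = x6 • φ 1 + y6 • φ 4 + (0:k) • φ 6 := by rw [hφ4]
        _ = 0 := by simpa using h16
    have h := ind013 _ _ _ hrel
    have hy6 : y6 = 0 := by
      rcases mul_eq_zero.mp h.1 with h' | h'
      · exact h'
      · exact absurd h' hc
    exact hn16 ⟨h.2.1, hy6, hz⟩
  have hsol6'' : φ 6 = (-(z6⁻¹ * x6)) • φ 1 + (-(z6⁻¹ * y6)) • φ 4 := solve2 h16 hz6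
  have hφ6'' : φ 6 = ((-(z6⁻¹ * y6)) * c) • φ 0 + (-(z6⁻¹ * x6)) • φ 1
      + ((-(z6⁻¹ * y6)) * d) • φ 3 := by
    rw [hsol6'', hφ4]; module
  have heq2 := sub3 (k := k) (u := φ 0) (v := φ 1) (w := φ 3) (hφ6.symm.trans hφ6'')
  have hcmp2 := ind013 _ _ _ heq2
  have hα2 : t * a = (-(z6⁻¹ * y6)) * c := sub_eq_zero.mp hcmp2.1
  have hγ2 : s = (-(z6⁻¹ * y6)) * d := sub_eq_zero.mp hcmp2.2.2
  have r2 : (t * a) * d = s * c := by rw [hα2, hγ2]; ring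
  -- circuit {2,4,5}
  obtain ⟨x7, y7, z7, h245, hn245⟩ := dep 2 4 5 (by decide) (by decide) (by decide)
    (by simp [fanoCircuits])
  have hrel245 : (x7 * a + y7 * c) • φ 0 + (x7 * b + z7 * e) • φ 1
      + (y7 * d + z7 * f) • φ 3 = 0 := by
    calc (x7 * a + y7 * c) • φ 0 + (x7 * b + z7 * e) • φ 1 + (y7 * d + z7 * f) • φ 3
        = x7 • (a • φ 0 + b • φ 1) + y7 • (c • φ 0 + d • φ 3)
          + z7 • (e • φ 1 + f • φ 3) := by module
      _ = x7 • φ 2 + y7 • φ 4 + z7 • φ 5 := by rw [hφ2, hφ4, hφ5]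
      _ = 0 := h245
  obtain ⟨e1, e2, e3⟩ := ind013 _ _ _ hrel245
  have hx7 : x7 ≠ 0 := by
    intro h0
    have hy7 : y7 = 0 := by
      rw [h0] at e1; simp at e1
      rcases e1 with h' | h' <;> [exact h'; exact absurd h' hc]
    have hz7 : z7 = 0 := by
      rw [h0] at e2; simp at e2
      rcases e2 with h' | h' <;> [exact h'; exact absurd h' he]
    exact hn245 ⟨h0, hy7, hz7⟩
  have hy7 : y7 ≠ 0 := by
    intro h0
    have hx : x7 = 0 := by
      rw [h0] at e1; simp at e1
      rcases e1 with h' | h' <;> [exact h'; exact absurd h' ha]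
    exact hx7 hx
  have hz7 : z7 ≠ 0 := by
    intro h0
    have hy : y7 = 0 := by
      rw [h0] at e3; simp at e3
      rcases e3 with h' | h' <;> [exact h'; exact absurd h' hd]
    exact hy7 hy
  -- the two incompatible relations
  have hades1 : a * d * e = b * c * f := by
    have hkey : a * d * e * ((t * a) * s) = b * c * f * ((t * a) * s) := by
      linear_combination (a * e * s) * r2 - (a * c * s) * r1
    exact mul_right_cancel₀ (mul_ne_zero hta hs0) hkey
  have hades2 : a * d * e = -(b * c * f) := by
    have hkey : (x7 * y7 * z7) * (a * d * e) = (x7 * y7 * z7) * (-(b * c * f)) := by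
      linear_combination (y7 * z7 * d * e) * e1 + (y7 * z7 * c * f) * e2
        - (y7 * z7 * c * e) * e3
    exact mul_left_cancel₀ (mul_ne_zero (mul_ne_zero hx7 hy7) hz7) hkey
  have h2bcf : (2 : k) * (b * c * f) = 0 := by linear_combination hades2 - hades1
  have h20 : (2 : k) = 0 := by
    rcases mul_eq_zero.mp h2bcf with h' | h'
    · exact h'
    · exact absurd h' (mul_ne_zero (mul_ne_zero hb hc) hf)
  have hdvd : ringChar k ∣ 2 := ringChar.dvd (by exact_mod_cast h20)
  rcases (Nat.prime_two.eq_one_or_self_of_dvd _ hdvd) with h1 | h2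
  · exact absurd h1 (CharP.ringChar_ne_one)
  · exact h2 ▸ ringChar.charP k
end

section
/- The non-Pappus matroid is not representable over any field. -/
/-- The 3-element circuits of the non-Pappus matroid on `{0, ..., 8}`
(the sets `{1,6,8}, {2,5,8}, {1,4,9}, {2,3,9}, {3,6,7}, {4,5,7}, {2,4,6}, {1,3,5}`
shifted to 0-indexing). -/
def nonPappusCircuits : Set (Set (Fin 9)) :=
  {{0,5,7}, {1,4,7}, {0,3,8}, {1,2,8}, {2,5,6}, {3,4,6}, {1,3,5}, {0,2,4}}

/-- Independence in the non-Pappus matroid: sets of cardinality at most `3` containing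
none of the listed `3`-element circuits. -/
def nonPappusIndep (X : Set (Fin 9)) : Prop :=
  X.ncard ≤ 3 ∧ ∀ C ∈ nonPappusCircuits, ¬C ⊆ X

section Helpers

variable {k : Type*} [Field k] {M : Type*} [AddCommGroup M] [Module k M]

lemma li_pair_of_set {v : Fin 9 → M} {a b : Fin 9} (hab : a ≠ b)
    (h : LinearIndependent k (fun x : ({a, b} : Set (Fin 9)) => v x)) :
    LinearIndependent k ![v a, v b] := by
  let g : Fin 2 → ({a, b} : Set (Fin 9)) := ![⟨a, by simp⟩, ⟨b, by simp⟩]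
  have hinj : Function.Injective g := by
    intro i j hij
    fin_cases i <;> fin_cases j <;> simp_all [g]
  have := h.comp g hinj
  convert this using 1
  funext i; fin_cases i <;> rfl

lemma li_set_of_triple {v : Fin 9 → M} {a b c : Fin 9} (hab : a ≠ b) (hac : a ≠ c) (hbc : b ≠ c)
    (h : LinearIndependent k ![v a, v b, v c]) :
    LinearIndependent k (fun x : ({a, b, c} : Set (Fin 9)) => v x) := by
  let σ : ({a, b, c} : Set (Fin 9)) → Fin 3 := fun x => if x.1 = a then 0 else if x.1 = b then 1 else 2
  have hcomp : (fun x : ({a, b, c} : Set (Fin 9)) => v x) = ![v a, v b, v c] ∘ σ := by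
    funext x
    obtain ⟨x, hx⟩ := x
    rcases hx with rfl | rfl | rfl <;> simp [σ, hab, hab.symm, hac.symm, hbc.symm]
  have hinj : Function.Injective σ := by
    rintro ⟨x, hx⟩ ⟨y, hy⟩ hxy
    apply Subtype.ext
    rcases hx with rfl | rfl | rfl <;> rcases hy with rfl | rfl | rfl <;>
      simp_all [σ, hab, hab.symm, hac.symm, hbc.symm]
  rw [hcomp]
  exact h.comp σ hinj

lemma li_triple_of_set {v : Fin 9 → M} {a b c : Fin 9} (hab : a ≠ b) (hac : a ≠ c) (hbc : b ≠ c)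
    (h : LinearIndependent k (fun x : ({a, b, c} : Set (Fin 9)) => v x)) :
    LinearIndependent k ![v a, v b, v c] := by
  let g : Fin 3 → ({a, b, c} : Set (Fin 9)) := ![⟨a, by simp⟩, ⟨b, by simp⟩, ⟨c, by simp⟩]
  have hinj : Function.Injective g := by
    intro i j hij
    fin_cases i <;> fin_cases j <;> simp_all [g]
  have := h.comp g hinj
  convert this using 1
  funext i; fin_cases i <;> rfl

lemma comb_of_dep {x y z : M} (hxy : LinearIndependent k ![x, y])
    (hdep : ¬ LinearIndependent k ![x, y, z]) : ∃ α β : k, z = α • x + β • y := by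
  obtain ⟨g, hg, i, hi⟩ := Fintype.not_linearIndependent_iff.mp hdep
  rw [Fin.sum_univ_three] at hg
  simp only [Matrix.cons_val_zero, Matrix.cons_val_one, Matrix.head_cons,
    Matrix.cons_val_two, Matrix.tail_cons] at hg
  by_cases h2 : g 2 = 0
  · exfalso
    rw [h2, zero_smul, add_zero] at hg
    obtain ⟨h0, h1⟩ := hxy.eq_zero_of_pair hg
    fin_cases i <;> simp_all
  · have hz : (g 2) • z = (-(g 0)) • x + (-(g 1)) • y := by
      rw [neg_smul, neg_smul]; linear_combination (norm := module) hg
    refine ⟨(g 2)⁻¹ * (-(g 0)), (g 2)⁻¹ * (-(g 1)), ?_⟩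
    have := congrArg (fun m : M => (g 2)⁻¹ • m) hz
    simpa [smul_smul, smul_add, inv_smul_smul₀ h2] using this

lemma first_ne {x y z : M} {α β : k} (hyz : LinearIndependent k ![y, z])
    (h : z = α • x + β • y) (h0 : α = 0) : False := by
  subst h0
  rw [zero_smul, zero_add] at h
  have : β • y + (-1 : k) • z = 0 := by rw [h]; module
  simpa using (hyz.eq_zero_of_pair this).2

lemma second_ne {x y z : M} {α β : k} (hxz : LinearIndependent k ![x, z])
    (h : z = α • x + β • y) (h0 : β = 0) : False := by
  subst h0
  rw [zero_smul, add_zero] at h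
  have : α • x + (-1 : k) • z = 0 := by rw [h]; module
  simpa using (hxz.eq_zero_of_pair this).2

end Helpers

lemma circuit_ncard {C : Set (Fin 9)} (hC : C ∈ nonPappusCircuits) : C.ncard = 3 := by
  rcases hC with rfl | rfl | rfl | rfl | rfl | rfl | rfl | rfl <;>
    exact Set.ncard_eq_three.mpr ⟨_, _, _, by decide, by decide, by decide, rfl⟩

lemma indep_pair {a b : Fin 9} (hab : a ≠ b) : nonPappusIndep {a, b} := by
  constructor
  · rw [Set.ncard_pair hab]; norm_num
  · intro C hC hsub
    have h1 := circuit_ncard hC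
    have h2 : C.ncard ≤ ({a, b} : Set (Fin 9)).ncard :=
      Set.ncard_le_ncard hsub (Set.toFinite _)
    rw [Set.ncard_pair hab] at h2
    omega

lemma triple_ncard (a b c : Fin 9) : ({a, b, c} : Set (Fin 9)).ncard ≤ 3 := by
  apply le_trans (Set.ncard_insert_le _ _)
  have := Set.ncard_insert_le b ({c} : Set (Fin 9))
  simp [Set.ncard_singleton] at this ⊢
  omega

lemma indep012 : nonPappusIndep {0, 1, 2} := by
  refine ⟨triple_ncard _ _ _, ?_⟩
  intro C hC
  rcases hC with rfl | rfl | rfl | rfl | rfl | rfl | rfl | rfl <;>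
    · rw [Set.subset_def]
      simp only [Set.mem_insert_iff, Set.mem_singleton_iff]
      decide

lemma indep678 : nonPappusIndep {6, 7, 8} := by
  refine ⟨triple_ncard _ _ _, ?_⟩
  intro C hC
  rcases hC with rfl | rfl | rfl | rfl | rfl | rfl | rfl | rfl <;>
    · rw [Set.subset_def]
      simp only [Set.mem_insert_iff, Set.mem_singleton_iff]
      decide

/-- The non-Pappus matroid is not representable over any field. -/
theorem nonPappus_not_representable {k : Type*} [Field k] (φ : Fin 9 → (Fin 3 → k)) :
    ¬ ∀ X : Set (Fin 9), nonPappusIndep X ↔ LinearIndependent k (fun x : X => φ x) := by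
  intro h
  have pairLI : ∀ a b : Fin 9, a ≠ b → LinearIndependent k ![φ a, φ b] :=
    fun a b hab => li_pair_of_set hab ((h _).mp (indep_pair hab))
  have comb : ∀ a b c : Fin 9, a ≠ b → a ≠ c → b ≠ c →
      ({a, b, c} : Set (Fin 9)) ∈ nonPappusCircuits →
      ∃ α β : k, φ c = α • φ a + β • φ b := by
    intro a b c hab hac hbc hC
    refine comb_of_dep (pairLI a b hab) (fun hli => ?_)
    have h2 := (h _).mpr (li_set_of_triple hab hac hbc hli)
    exact h2.2 _ hC subset_rfl
  have m083 : ({0, 8, 3} : Set (Fin 9)) ∈ nonPappusCircuits := by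
    have : ({0, 8, 3} : Set (Fin 9)) = {0, 3, 8} := by ext x; simp; tauto
    rw [this]; simp [nonPappusCircuits]
  obtain ⟨p, q, e4⟩ := comb 0 2 4 (by decide) (by decide) (by decide) (by simp [nonPappusCircuits])
  obtain ⟨r, s, e8⟩ := comb 1 2 8 (by decide) (by decide) (by decide) (by simp [nonPappusCircuits])
  obtain ⟨u, w, e3⟩ := comb 0 8 3 (by decide) (by decide) (by decide) m083
  obtain ⟨a, b, e5⟩ := comb 1 3 5 (by decide) (by decide) (by decide) (by simp [nonPappusCircuits])
  obtain ⟨c, d, e7⟩ := comb 0 5 7 (by decide) (by decide) (by decide) (by simp [nonPappusCircuits])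
  obtain ⟨e, f, e7'⟩ := comb 1 4 7 (by decide) (by decide) (by decide) (by simp [nonPappusCircuits])
  obtain ⟨g, hh, e6⟩ := comb 2 5 6 (by decide) (by decide) (by decide) (by simp [nonPappusCircuits])
  obtain ⟨i, j, e6'⟩ := comb 3 4 6 (by decide) (by decide) (by decide) (by simp [nonPappusCircuits])
  have hc : c ≠ 0 := fun h0 => first_ne (pairLI 5 7 (by decide)) e7 h0
  have he : e ≠ 0 := fun h0 => first_ne (pairLI 4 7 (by decide)) e7' h0
  have hhh : hh ≠ 0 := fun h0 => second_ne (pairLI 2 6 (by decide)) e6 h0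
  have LI012 := li_triple_of_set (v := φ) (by decide) (by decide) (by decide) ((h _).mp indep012)
  have LI678 := li_triple_of_set (v := φ) (by decide) (by decide) (by decide) ((h _).mp indep678)
  have key1 : (c + d*b*u - f*p) • φ 0 + (d*a + d*b*w*r - e) • φ 1 + (d*b*w*s - f*q) • φ 2 = 0 := by
    have h1 := e7.symm.trans e7'
    rw [e5, e3, e8, e4] at h1
    linear_combination (norm := module) h1
  have t1 := Fintype.linearIndependent_iff.mp LI012
    ![c + d*b*u - f*p, d*a + d*b*w*r - e, d*b*w*s - f*q]
    (by simpa [Fin.sum_univ_three] using key1)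
  have i1 : c + d*b*u - f*p = 0 := by simpa using t1 0
  have i2 : d*a + d*b*w*r - e = 0 := by simpa using t1 1
  have i3 : d*b*w*s - f*q = 0 := by simpa using t1 2
  have key2 : (hh*b*u - i*u - j*p) • φ 0 + (hh*a + hh*b*w*r - i*w*r) • φ 1 +
      (hh*b*w*s + g - i*w*s - j*q) • φ 2 = 0 := by
    have h1 := e6.symm.trans e6'
    rw [e5, e3, e8, e4] at h1
    linear_combination (norm := module) h1
  have t2 := Fintype.linearIndependent_iff.mp LI012
    ![hh*b*u - i*u - j*p, hh*a + hh*b*w*r - i*w*r, hh*b*w*s + g - i*w*s - j*q]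
    (by simpa [Fin.sum_univ_three] using key2)
  have i4 : hh*b*u - i*u - j*p = 0 := by simpa using t2 0
  have i5 : hh*a + hh*b*w*r - i*w*r = 0 := by simpa using t2 1
  have i6 : hh*b*w*s + g - i*w*s - j*q = 0 := by simpa using t2 2
  have final : (f*p*d*r) • φ 6 + (-(b*u*hh*d*r)) • φ 7 + (-(e*c*hh)) • φ 8 = 0 := by
    rw [e6, e7, e5, e3, e8]
    match_scalars
    · linear_combination (-(d*r*d*b*w*s))*i4 + (d*r*f*p)*i6 + (-(d*r*j*p))*i3 +
        (-(d*r*i*w*s))*i1 + (-(d*c*s))*i5 + (c*hh*s)*i2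
    · linear_combination (c*hh*r)*i2 - ((a + b*w*r)*hh*d*r)*i1
    · linear_combination (-(hh*d*r*b*u)) * i1
  have t3 := Fintype.linearIndependent_iff.mp LI678
    ![f*p*d*r, -(b*u*hh*d*r), -(e*c*hh)]
    (by simpa [Fin.sum_univ_three] using final) 2
  simp only [Matrix.cons_val_two, Matrix.tail_cons, Matrix.head_cons, neg_eq_zero] at t3
  exact mul_ne_zero (mul_ne_zero he hc) hhh t3
end
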